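/- If T : V → g is an O-operator with respect to (V;ρ), then the Lie bracket on V ⊕ g defined by [(x,u),(y,v)]' := ([u,v]_T, ρ̄(u)y − ρ̄(v)x), where [u,v]_T = ρ(Tu)v − ρ(Tv)u and ρ̄(u)(x) = [Tu,x] + T(ρ(x)u), coincides with the Nijenhuis-deformed bracket [·,·]_{N_T} on the semidirect product g ⋉_ρ V and hence is a Lie algebra structure on g ⊕ V. -/

import Mathlib

attribute [local instance 100] LieRing.ofAssociativeRing

/-- The semidirect product bracket on `g × V`. -/
def sdBracket {K : Type*} [Field K] {g : Type*} [LieRing g] [LieAlgebra K g]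
    {V : Type*} [AddCommGroup V] [Module K V]
    (ρ : g →ₗ⁅K⁆ Module.End K V) (p q : g × V) : g × V :=
  (⁅p.1, q.1⁆, ρ p.1 q.2 - ρ q.1 p.2)

/-- The operator `N_T(x,u) = (Tu, 0)` on `g × V`. -/
def NT {K : Type*} [Field K] {g : Type*} [LieRing g] [LieAlgebra K g]
    {V : Type*} [AddCommGroup V] [Module K V]
    (T : V →ₗ[K] g) (p : g × V) : g × V :=
  (T p.2, 0)

/-- The bracket on `g × V` deformed by the Nijenhuis operator `N_T`. -/
def dBracket {K : Type*} [Field K] {g : Type*} [LieRing g] [LieAlgebra K g]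
    {V : Type*} [AddCommGroup V] [Module K V]
    (ρ : g →ₗ⁅K⁆ Module.End K V) (T : V →ₗ[K] g) (a b : g × V) : g × V :=
  sdBracket ρ (NT T a) b + sdBracket ρ a (NT T b) - NT T (sdBracket ρ a b)

lemma dB_eq {K : Type*} [Field K] {g : Type*} [LieRing g] [LieAlgebra K g]
    {V : Type*} [AddCommGroup V] [Module K V]
    (ρ : g →ₗ⁅K⁆ Module.End K V) (T : V →ₗ[K] g) (x y : g) (u v : V) :
    dBracket ρ T (x, u) (y, v)
      = ((⁅T u, y⁆ + T (ρ y u)) - (⁅T v, x⁆ + T (ρ x v)),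
          ρ (T u) v - ρ (T v) u) := by
  simp only [dBracket, sdBracket, NT, Prod.mk_add_mk, Prod.mk_sub_mk, map_sub, map_zero]
  rw [Prod.mk.injEq]
  constructor
  · rw [← lie_skew x (T v)]; abel
  · abel

set_option maxHeartbeats 2000000 in
/-- If `T` is an O-operator, the bracket
`[(x,u),(y,v)]' = (ρ̄(u)y − ρ̄(v)x, [u,v]_T)` (with the `g`-component
`ρ̄(u)y − ρ̄(v)x` and `V`-component `[u,v]_T`) coincides with the Nijenhuis
deformed bracket `[·,·]_{N_T}` on `g ⋉_ρ V`, and hence is a Lie algebra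
structure on `g ⊕ V`. -/
theorem stmt12 {K : Type*} [Field K]
    {g : Type*} [LieRing g] [LieAlgebra K g]
    {V : Type*} [AddCommGroup V] [Module K V]
    (ρ : g →ₗ⁅K⁆ Module.End K V) (T : V →ₗ[K] g)
    (hT : ∀ u v : V, ⁅T u, T v⁆ = T (ρ (T u) v - ρ (T v) u)) :
    (∀ (x y : g) (u v : V),
      dBracket ρ T (x, u) (y, v)
        = ((⁅T u, y⁆ + T (ρ y u)) - (⁅T v, x⁆ + T (ρ x v)),
            ρ (T u) v - ρ (T v) u)) ∧
    (∀ a : g × V, dBracket ρ T a a = 0) ∧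
    (∀ a b c : g × V,
      dBracket ρ T a (dBracket ρ T b c) + dBracket ρ T b (dBracket ρ T c a)
        + dBracket ρ T c (dBracket ρ T a b) = 0) := by
  refine ⟨dB_eq ρ T, ?_, ?_⟩
  · rintro ⟨x, u⟩
    rw [dB_eq]
    simp
  · rintro ⟨x, u⟩ ⟨y, v⟩ ⟨z, w⟩
    simp only [dB_eq, Prod.ext_iff, Prod.fst_add, Prod.snd_add, Prod.fst_zero, Prod.snd_zero]
    constructor
    · simp only [map_add, map_sub, map_smul, map_neg, LieHom.map_lie, lie_add, add_lie,
        lie_sub, sub_lie, lie_smul, smul_lie, lie_neg, neg_lie, lie_lie, Ring.lie_def,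
        LinearMap.add_apply, LinearMap.sub_apply, LinearMap.smul_apply,
        LinearMap.neg_apply, Module.End.mul_apply, hT]
      have e : ∀ (a b : V) (c : g), ⁅T (ρ (T a) b), c⁆
          = ⁅T a, ⁅T b, c⁆⁆ - ⁅T b, ⁅T a, c⁆⁆ + ⁅T (ρ (T b) a), c⁆ := by
        intro a b c
        rw [← lie_lie, hT a b, map_sub, sub_lie]
        abel
      rw [e v w x, e w u y, e u v z]
      abel
    · have h' : ∀ u v : V, T (ρ (T u) v - ρ (T v) u) = ⁅T u, T v⁆ :=
        fun u v => (hT u v).symm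
      simp only [map_add, map_sub, LieHom.map_lie, Ring.lie_def, LinearMap.sub_apply,
        Module.End.mul_apply, h']
      abel
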